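/- If (x, p) is IC, then x is nondecreasing on [0, v̄] and the buyer's utility satisfies the envelope formula u(v) = u(0) + ∫_0^v x(s) ds for every v ∈ [0, v̄]. -/

import Mathlib

open MeasureTheory intervalIntegral

/-- For a single-buyer, single-item mechanism `(x, p)` on `[0, v̄]`,
incentive compatibility implies that the allocation rule `x` is nondecreasing on
`[0, v̄]` and that the buyer's utility `u(v) = v·x(v) − p(v)` satisfies the envelope
formula `u(v) = u(0) + ∫_0^v x(s) ds`. -/
theorem IC_implies_monotone_and_envelope
    (vbar : ℝ) (hvbar : 0 < vbar)
    (x p : ℝ → ℝ)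
    (hx01 : ∀ v ∈ Set.Icc (0 : ℝ) vbar, x v ∈ Set.Icc (0 : ℝ) 1)
    (hIC : ∀ v ∈ Set.Icc (0 : ℝ) vbar, ∀ v' ∈ Set.Icc (0 : ℝ) vbar,
      v * x v' - p v' ≤ v * x v - p v) :
    MonotoneOn x (Set.Icc (0 : ℝ) vbar) ∧
    ∀ v ∈ Set.Icc (0 : ℝ) vbar,
      v * x v - p v = ((0 : ℝ) * x 0 - p 0) + ∫ s in (0 : ℝ)..v, x s := by
  -- the utility function
  set u : ℝ → ℝ := fun v => v * x v - p v with hu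
  -- monotonicity
  have hmono : MonotoneOn x (Set.Icc (0 : ℝ) vbar) := by
    intro a ha b hb hab
    rcases eq_or_lt_of_le hab with rfl | hlt
    · exact le_rfl
    · have h1 := hIC a ha b hb
      have h2 := hIC b hb a ha
      nlinarith
  refine ⟨hmono, ?_⟩
  -- sandwich for `u`
  have husand : ∀ a ∈ Set.Icc (0 : ℝ) vbar, ∀ b ∈ Set.Icc (0 : ℝ) vbar, a ≤ b →
      (b - a) * x a ≤ u b - u a ∧ u b - u a ≤ (b - a) * x b := by
    intro a ha b hb hab
    have h1 := hIC a ha b hb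
    have h2 := hIC b hb a ha
    constructor <;> · simp only [hu]; nlinarith
  -- integrability and sandwich for the integral
  have hint : ∀ a ∈ Set.Icc (0 : ℝ) vbar, ∀ b ∈ Set.Icc (0 : ℝ) vbar, a ≤ b →
      IntervalIntegrable x volume a b := by
    intro a ha b hb hab
    apply MonotoneOn.intervalIntegrable
    rw [Set.uIcc_of_le hab]
    exact hmono.mono (Set.Icc_subset_Icc ha.1 hb.2)
  have hisand : ∀ a ∈ Set.Icc (0 : ℝ) vbar, ∀ b ∈ Set.Icc (0 : ℝ) vbar, a ≤ b →
      (b - a) * x a ≤ (∫ s in a..b, x s) ∧ (∫ s in a..b, x s) ≤ (b - a) * x b := by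
    intro a ha b hb hab
    have hxi := hint a ha b hb hab
    have hsub : Set.Icc a b ⊆ Set.Icc (0 : ℝ) vbar := Set.Icc_subset_Icc ha.1 hb.2
    constructor
    · have := intervalIntegral.integral_mono_on hab (_root_.intervalIntegrable_const (c := x a)) hxi
        (fun t ht => hmono ha (hsub ht) ht.1)
      simpa [mul_comm] using this
    · have := intervalIntegral.integral_mono_on hab hxi (_root_.intervalIntegrable_const (c := x b))
        (fun t ht => hmono (hsub ht) hb ht.2)
      simpa [mul_comm] using this
  -- envelope formula
  intro v hv
  rcases eq_or_lt_of_le hv.1 with rfl | hvpos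
  · simp [hu]
  have h0 : (0 : ℝ) ∈ Set.Icc (0 : ℝ) vbar := ⟨le_rfl, hvbar.le⟩
  -- the error with the uniform partition of size `n+1` is at most `v / (n+1)`
  have key : ∀ n : ℕ, |u v - u 0 - ∫ s in (0:ℝ)..v, x s| ≤ v / (n + 1) := by
    intro n
    set m : ℕ := n + 1 with hm
    set t : ℕ → ℝ := fun i => (i : ℝ) * v / m with ht
    have hmpos : (0 : ℝ) < m := by positivity
    have ht0 : t 0 = 0 := by simp [ht]
    have htm : t m = v := by show (m : ℝ) * v / m = v; exact mul_div_cancel_left₀ v hmpos.ne'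
    have htmem : ∀ i : ℕ, i ≤ m → t i ∈ Set.Icc (0 : ℝ) vbar := by
      intro i hi
      constructor
      · positivity
      · have : (i : ℝ) * v / m ≤ v := by
          rw [div_le_iff₀ hmpos]
          have : (i : ℝ) ≤ m := by exact_mod_cast hi
          nlinarith
        exact this.trans hv.2
    have hmcast : ((m : ℕ) : ℝ) = (n : ℝ) + 1 := by push_cast [hm]; ring
    have htle : ∀ i : ℕ, t i ≤ t (i + 1) := by
      intro i
      simp only [ht]
      have h1 : (i : ℝ) * v ≤ ((i + 1 : ℕ) : ℝ) * v := by push_cast; nlinarith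
      exact div_le_div_of_nonneg_right h1 hmpos.le
    -- telescoping of integrals
    have hteli : ∑ i ∈ Finset.range m, (∫ s in t i..t (i+1), x s) = ∫ s in (0:ℝ)..v, x s := by
      rw [intervalIntegral.sum_integral_adjacent_intervals (fun i hi =>
        hint (t i) (htmem i (by omega)) (t (i+1)) (htmem (i+1) (by omega)) (htle i))]
      rw [ht0, htm]
    -- telescoping of u
    have htelu : ∑ i ∈ Finset.range m, (u (t (i+1)) - u (t i)) = u v - u 0 := by
      rw [Finset.sum_range_sub (fun i => u (t i)), ht0, htm]
    have hE : u v - u 0 - (∫ s in (0:ℝ)..v, x s)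
        = ∑ i ∈ Finset.range m, ((u (t (i+1)) - u (t i)) - ∫ s in t i..t (i+1), x s) := by
      rw [Finset.sum_sub_distrib, htelu, hteli]
    rw [hE]
    calc |∑ i ∈ Finset.range m, ((u (t (i+1)) - u (t i)) - ∫ s in t i..t (i+1), x s)|
        ≤ ∑ i ∈ Finset.range m, |(u (t (i+1)) - u (t i)) - ∫ s in t i..t (i+1), x s| :=
          Finset.abs_sum_le_sum_abs _ _
      _ ≤ ∑ i ∈ Finset.range m, (v / m) * (x (t (i+1)) - x (t i)) := by
          apply Finset.sum_le_sum
          intro i hi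
          have hi' : i < m := Finset.mem_range.mp hi
          have hia := htmem i hi'.le
          have hib := htmem (i+1) hi'
          have h1 := husand (t i) hia (t (i+1)) hib (htle i)
          have h2 := hisand (t i) hia (t (i+1)) hib (htle i)
          have hgap : t (i+1) - t i = v / m := by
            simp only [ht]
            push_cast
            ring
          rw [hgap] at h1 h2
          rw [abs_le]
          constructor
          · linarith [h1.1, h2.2]
          · linarith [h1.2, h2.1]
      _ = (v / m) * (x v - x 0) := by
          rw [← Finset.mul_sum, Finset.sum_range_sub (fun i => x (t i)), ht0, htm]
      _ ≤ v / m := by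
          have h1 := (hx01 v hv).2
          have h2 := (hx01 0 h0).1
          have h3 : x v - x 0 ≤ 1 := by linarith
          have hvm : 0 ≤ v / (m : ℝ) := by positivity
          nlinarith
      _ = v / ((n : ℝ) + 1) := by rw [hmcast]
  -- take the limit
  have hlim : Filter.Tendsto (fun n : ℕ => v / (n + 1)) Filter.atTop (nhds 0) := by
    have := (Filter.tendsto_add_atTop_iff_nat 1).2 (tendsto_const_div_atTop_nhds_zero_nat v)
    simpa [Nat.cast_add] using this
  have habs : |u v - u 0 - ∫ s in (0:ℝ)..v, x s| ≤ 0 :=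
    ge_of_tendsto hlim (Filter.Eventually.of_forall key)
  have : u v - u 0 - (∫ s in (0:ℝ)..v, x s) = 0 := abs_eq_zero.mp (le_antisymm habs (abs_nonneg _))
  simp only [hu] at this ⊢
  linarith
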